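/- Let Z be a complex m×m matrix whose imaginary part Im Z = (Z - Z*)/(2i) is positive definite. Then Z is invertible and ‖Z⁻¹‖ ≤ ‖(Im Z)⁻¹‖ (operator norms). -/

import Mathlib

open Matrix
open scoped ComplexOrder InnerProductSpace

/-- The "imaginary part" `(Z - Z*)/(2i)` of a complex square matrix. -/
noncomputable def matIm {m : ℕ} (Z : Matrix (Fin m) (Fin m) ℂ) :
    Matrix (Fin m) (Fin m) ℂ := (2 * Complex.I)⁻¹ • (Z - Zᴴ)

section aux
variable {m : ℕ}

open scoped MatrixOrder in
/-- Lemma 1: for PSD B, ‖b w‖² ≤ ‖b‖ · re⟪w, b w⟫. -/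
lemma psd_sq_bound {B : Matrix (Fin m) (Fin m) ℂ} (hB : B.PosSemidef)
    (w : EuclideanSpace ℂ (Fin m)) :
    ‖toEuclideanCLM (𝕜 := ℂ) B w‖ ^ 2 ≤
      ‖toEuclideanCLM (𝕜 := ℂ) B‖ * RCLike.re (⟪w, toEuclideanCLM (𝕜 := ℂ) B w⟫_ℂ) := by
  set c := toEuclideanCLM (𝕜 := ℂ) (CFC.sqrt B) with hc
  have hmul : toEuclideanCLM (𝕜 := ℂ) B = c * c := by
    rw [hc, ← _root_.map_mul, CFC.sqrt_mul_sqrt_self B hB.nonneg]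
  have hstar : star c = c := by
    rw [hc, ← map_star, Matrix.star_eq_conjTranspose, (CFC.sqrt_nonneg B).posSemidef.1]
  have h1 : ∀ v, ⟪c w, v⟫_ℂ = ⟪w, c v⟫_ℂ := by
    intro v
    rw [← ContinuousLinearMap.adjoint_inner_right, ← ContinuousLinearMap.star_eq_adjoint, hstar]
  have hcw : ‖c (c w)‖ ≤ ‖c‖ * ‖c w‖ := c.le_opNorm _
  have hcw2 : ‖c w‖ ^ 2 = RCLike.re (⟪w, toEuclideanCLM (𝕜 := ℂ) B w⟫_ℂ) := by
    rw [hmul, ← inner_self_eq_norm_sq (𝕜 := ℂ), h1]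
    rfl
  have hnc : ‖c‖ ^ 2 = ‖toEuclideanCLM (𝕜 := ℂ) B‖ := by
    rw [hmul, sq, ← CStarRing.norm_star_mul_self, hstar]
  calc ‖toEuclideanCLM (𝕜 := ℂ) B w‖ ^ 2 = ‖c (c w)‖ ^ 2 := by rw [hmul]; rfl
    _ ≤ (‖c‖ * ‖c w‖) ^ 2 := by
        apply pow_le_pow_left₀ (norm_nonneg _) hcw
    _ = ‖c‖ ^ 2 * ‖c w‖ ^ 2 := by ring
    _ = _ := by rw [hnc, hcw2]

/-- Lemma 2: re⟪v, a v⟫ ≤ ‖v‖·‖t v‖ where a = Im Z. -/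
lemma im_inner_bound (Z : Matrix (Fin m) (Fin m) ℂ) (v : EuclideanSpace ℂ (Fin m)) :
    RCLike.re (⟪v, toEuclideanCLM (𝕜 := ℂ) (matIm Z) v⟫_ℂ) ≤
      ‖v‖ * ‖toEuclideanCLM (𝕜 := ℂ) Z v‖ := by
  set t := toEuclideanCLM (𝕜 := ℂ) Z with ht
  have ha : toEuclideanCLM (𝕜 := ℂ) (matIm Z) = (2 * Complex.I)⁻¹ • (t - star t) := by
    rw [matIm, _root_.map_smul, map_sub, ← Matrix.star_eq_conjTranspose, map_star]
  set z := (⟪v, t v⟫_ℂ) with hz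
  have hadj : (⟪v, (star t) v⟫_ℂ) = starRingEnd ℂ z := by
    rw [ContinuousLinearMap.star_eq_adjoint, ContinuousLinearMap.adjoint_inner_right,
      ← inner_conj_symm]
  have hinner : (⟪v, toEuclideanCLM (𝕜 := ℂ) (matIm Z) v⟫_ℂ) = (z.im : ℂ) := by
    rw [ha]
    simp only [ContinuousLinearMap.smul_apply, ContinuousLinearMap.sub_apply,
      inner_smul_right, inner_sub_right, hadj, ← hz]
    rw [Complex.sub_conj]
    field_simp
    push_cast; ring
  rw [hinner]
  simp only [RCLike.re_to_complex, Complex.ofReal_re]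
  calc z.im ≤ ‖z‖ := Complex.im_le_norm z
    _ = ‖z‖ := rfl
    _ ≤ ‖v‖ * ‖t v‖ := norm_inner_le_norm v (t v)

end aux

/-- If `Im Z` is positive definite then `Z` is invertible and
`‖Z⁻¹‖ ≤ ‖(Im Z)⁻¹‖` in the operator norm induced by the Euclidean norm. -/
theorem stmt1 {m : ℕ} (Z : Matrix (Fin m) (Fin m) ℂ) (hZ : (matIm Z).PosDef) :
    IsUnit Z ∧
      ‖Matrix.toEuclideanCLM (𝕜 := ℂ) Z⁻¹‖ ≤
        ‖Matrix.toEuclideanCLM (𝕜 := ℂ) (matIm Z)⁻¹‖ := by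
  set t := toEuclideanCLM (𝕜 := ℂ) Z with ht
  set b := toEuclideanCLM (𝕜 := ℂ) (matIm Z)⁻¹ with hb
  have hAunit : IsUnit (matIm Z) := hZ.isUnit
  have hinv_mul : (matIm Z)⁻¹ * matIm Z = 1 :=
    Matrix.nonsing_inv_mul _ (Matrix.isUnit_iff_isUnit_det _ |>.mp hAunit)
  -- key inequality
  have key : ∀ v : EuclideanSpace ℂ (Fin m), ‖v‖ ≤ ‖b‖ * ‖t v‖ := by
    intro v
    have h1 := psd_sq_bound hZ.inv.posSemidef (toEuclideanCLM (𝕜 := ℂ) (matIm Z) v)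
    have hbv : b (toEuclideanCLM (𝕜 := ℂ) (matIm Z) v) = v := by
      rw [hb, ← ContinuousLinearMap.comp_apply, ← ContinuousLinearMap.mul_def, ← _root_.map_mul,
        hinv_mul, _root_.map_one, ContinuousLinearMap.one_apply]
    rw [hbv] at h1
    have h2 : RCLike.re (⟪toEuclideanCLM (𝕜 := ℂ) (matIm Z) v, v⟫_ℂ)
        = RCLike.re (⟪v, toEuclideanCLM (𝕜 := ℂ) (matIm Z) v⟫_ℂ) := by
      rw [← inner_conj_symm]
      simp
      rw [← inner_conj_symm, Complex.conj_re]
    rw [h2] at h1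
    have h3 := im_inner_bound Z v
    have h4 : ‖v‖ ^ 2 ≤ ‖b‖ * (‖v‖ * ‖t v‖) := by
      calc ‖v‖ ^ 2 ≤ ‖b‖ * RCLike.re (⟪v, toEuclideanCLM (𝕜 := ℂ) (matIm Z) v⟫_ℂ) := h1
        _ ≤ ‖b‖ * (‖v‖ * ‖t v‖) := by
            apply mul_le_mul_of_nonneg_left h3 (norm_nonneg _)
    rcases eq_or_ne v 0 with rfl | hv
    · rw [norm_zero, map_zero, norm_zero, mul_zero]
    · have hvpos : 0 < ‖v‖ := lt_of_le_of_ne (norm_nonneg v) fun h => hv (norm_eq_zero.mp h.symm)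
      nlinarith [h4]
  -- invertibility
  have hinj : Function.Injective (Z.mulVec) := by
    intro x y hxy
    have : t ((WithLp.equiv 2 _).symm x) = t ((WithLp.equiv 2 _).symm y) := by
      rw [ht]
      simp only [WithLp.equiv_symm_apply, toEuclideanCLM_toLp, hxy]
    have h0 : t ((WithLp.equiv 2 _).symm x - (WithLp.equiv 2 _).symm y) = 0 := by
      rw [map_sub, this, sub_self]
    have := key ((WithLp.equiv 2 _).symm x - (WithLp.equiv 2 _).symm y)
    rw [h0] at this
    simp only [norm_zero, mul_zero] at this
    have hsub : (WithLp.equiv 2 _).symm x - (WithLp.equiv 2 _).symm y = 0 :=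
      norm_le_zero_iff.mp this
    have := sub_eq_zero.mp hsub
    exact (WithLp.equiv 2 _).symm.injective this
  have hU : IsUnit Z := Matrix.mulVec_injective_iff_isUnit.mp hinj
  refine ⟨hU, ?_⟩
  apply ContinuousLinearMap.opNorm_le_bound _ (norm_nonneg b)
  intro w
  have hmulinv : Z * Z⁻¹ = 1 := Matrix.mul_nonsing_inv _ (Matrix.isUnit_iff_isUnit_det _ |>.mp hU)
  have htw : t (toEuclideanCLM (𝕜 := ℂ) Z⁻¹ w) = w := by
    rw [ht, ← ContinuousLinearMap.comp_apply, ← ContinuousLinearMap.mul_def, ← _root_.map_mul,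
      hmulinv, _root_.map_one, ContinuousLinearMap.one_apply]
  calc ‖toEuclideanCLM (𝕜 := ℂ) Z⁻¹ w‖ ≤ ‖b‖ * ‖t (toEuclideanCLM (𝕜 := ℂ) Z⁻¹ w)‖ := key _
    _ = ‖b‖ * ‖w‖ := by rw [htw]
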